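/- Let p be a positive integer and C a p×p symmetric positive definite real matrix with C ≠ I_p. Then the function l(r) = (1+r)·log det((C + r·I_p)/(1+r)) is strictly increasing on (0,∞): for all 0 < s < t, (1+s)·log det((C + s·I_p)/(1+s)) < (1+t)·log det((C + t·I_p)/(1+t)). -/

import Mathlib

open Matrix

private lemma stmt17_scalar (a : ℝ) (ha : 0 < a) (ha1 : a ≠ 1) :
    StrictMonoOn (fun r : ℝ => (1+r) * (Real.log (a+r) - Real.log (1+r))) (Set.Ici 0) := by
  apply strictMonoOn_of_deriv_pos (convex_Ici 0)
  · apply ContinuousOn.mul (by fun_prop)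
    apply ContinuousOn.sub
    · exact ContinuousOn.log (by fun_prop) (fun x hx => by have := hx.out; positivity)
    · exact ContinuousOn.log (by fun_prop) (fun x hx => by have := hx.out; positivity)
  · intro x hx
    rw [interior_Ici] at hx
    have hx0 : (0:ℝ) < x := hx
    have hax : (0:ℝ) < a + x := by positivity
    have h1x : (0:ℝ) < 1 + x := by positivity
    have h1 : HasDerivAt (fun r : ℝ => a + r) 1 x := (hasDerivAt_id x).const_add a
    have h2 : HasDerivAt (fun r : ℝ => Real.log (a+r)) (1/(a+x)) x := h1.log hax.ne'
    have h3 : HasDerivAt (fun r : ℝ => (1:ℝ) + r) 1 x := (hasDerivAt_id x).const_add 1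
    have h4 : HasDerivAt (fun r : ℝ => Real.log (1+r)) (1/(1+x)) x := h3.log h1x.ne'
    have h5 : HasDerivAt (fun r : ℝ => (1+r) * (Real.log (a+r) - Real.log (1+r)))
        (1 * (Real.log (a+x) - Real.log (1+x)) + (1+x) * (1/(a+x) - 1/(1+x))) x :=
      h3.mul (h2.sub h4)
    rw [h5.deriv]
    set y := (a+x)/(1+x) with hy
    have hy0 : 0 < y := by positivity
    have hyne : y ≠ 1 := by
      rw [hy, ne_eq, div_eq_one_iff_eq h1x.ne']
      intro h; exact ha1 (by linarith)
    have hlog : Real.log (a+x) - Real.log (1+x) = Real.log y := (Real.log_div hax.ne' h1x.ne').symm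
    have hinv : (1+x) * (1/(a+x) - 1/(1+x)) = y⁻¹ - 1 := by
      field_simp [hy]
      have hyx : y * (1 + x) = a + x := by rw [hy, div_mul_cancel₀ _ h1x.ne']
      clear_value y
      linear_combination hyx
    have key : Real.log y⁻¹ < y⁻¹ - 1 :=
      Real.log_lt_sub_one_of_pos (by positivity) (by simpa using (inv_ne_one.mpr hyne))
    rw [Real.log_inv] at key
    rw [hlog, hinv]
    linarith

private lemma stmt17_det (p : ℕ) (C : Matrix (Fin p) (Fin p) ℝ) (hC : C.IsHermitian) (r : ℝ) :
    (C + r • (1 : Matrix (Fin p) (Fin p) ℝ)).det = ∏ i, (hC.eigenvalues i + r) := by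
  set U := (hC.eigenvectorUnitary : Matrix (Fin p) (Fin p) ℝ) with hUdef
  have hUU : U * star U = 1 := mem_unitaryGroup_iff.mp hC.eigenvectorUnitary.2
  have hdiag : (RCLike.ofReal ∘ hC.eigenvalues : Fin p → ℝ) = hC.eigenvalues := by
    ext i; simp
  have hsplit : C + r • (1 : Matrix (Fin p) (Fin p) ℝ)
      = U * (diagonal (fun i => hC.eigenvalues i + r)) * star U := by
    conv_lhs => rw [hC.spectral_theorem]
    rw [hdiag]
    have : r • (1 : Matrix (Fin p) (Fin p) ℝ) = U * (r • (1 : Matrix (Fin p) (Fin p) ℝ)) * star U := by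
      rw [Matrix.mul_smul, Matrix.smul_mul, Matrix.mul_one, hUU]
    rw [this, Unitary.conjStarAlgAut_apply, ← Matrix.add_mul, ← Matrix.mul_add]
    congr 2
    rw [smul_one_eq_diagonal, diagonal_add]
  have hUU' : star U * U = 1 := mem_unitaryGroup_iff'.mp hC.eigenvectorUnitary.2
  rw [hsplit, det_mul, det_mul, mul_comm, ← mul_assoc, ← det_mul, hUU', det_one, one_mul,
    det_diagonal]

theorem stmt17 (p : ℕ) (hp : 0 < p)
    (C : Matrix (Fin p) (Fin p) ℝ) (hC : C.PosDef) (hCne : C ≠ 1) :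
    ∀ s t : ℝ, 0 < s → s < t →
      (1 + s) * Real.log (((1 + s)⁻¹ • (C + s • (1 : Matrix (Fin p) (Fin p) ℝ))).det) <
        (1 + t) * Real.log (((1 + t)⁻¹ • (C + t • (1 : Matrix (Fin p) (Fin p) ℝ))).det) := by
  intro s t hs hst
  have hH : C.IsHermitian := hC.1
  have hev : ∀ i, 0 < hH.eigenvalues i := hC.eigenvalues_pos
  -- rewrite the expression as a sum
  have hexp : ∀ r : ℝ, 0 < r →
      (1 + r) * Real.log (((1 + r)⁻¹ • (C + r • (1 : Matrix (Fin p) (Fin p) ℝ))).det)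
        = ∑ i, (1 + r) * (Real.log (hH.eigenvalues i + r) - Real.log (1 + r)) := by
    intro r hr
    have h1r : (0:ℝ) < 1 + r := by linarith
    have hprodne : ∀ i ∈ Finset.univ, (hH.eigenvalues i + r) ≠ 0 :=
      fun i _ => by have := hev i; positivity
    rw [det_smul, stmt17_det p C hH r, Fintype.card_fin,
      Real.log_mul (by positivity) (Finset.prod_ne_zero_iff.mpr hprodne),
      Real.log_pow, Real.log_inv, Real.log_prod hprodne]
    simp only [mul_sub, Finset.sum_sub_distrib, Finset.sum_const, Finset.card_univ,
      Fintype.card_fin, nsmul_eq_mul, ← Finset.mul_sum]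
    ring
  rw [hexp s hs, hexp t (lt_trans hs hst)]
  -- there is an eigenvalue ≠ 1
  have hexists : ∃ i, hH.eigenvalues i ≠ 1 := by
    by_contra h
    push_neg at h
    apply hCne
    have hdiag : (RCLike.ofReal ∘ hH.eigenvalues : Fin p → ℝ) = fun _ => 1 := by
      ext i; simp [h i]
    have := hH.spectral_theorem
    rw [hdiag] at this
    rw [this]
    rw [show (diagonal (fun _ : Fin p => (1:ℝ))) = 1 from diagonal_one,
      map_one]
  obtain ⟨j, hj⟩ := hexists
  apply Finset.sum_lt_sum
  · intro i _
    by_cases h1 : hH.eigenvalues i = 1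
    · simp [h1]
    · exact le_of_lt (stmt17_scalar _ (hev i) h1 (le_of_lt hs) (le_of_lt (lt_trans hs hst)) hst)
  · exact ⟨j, Finset.mem_univ j,
      stmt17_scalar _ (hev j) hj (le_of_lt hs) (le_of_lt (lt_trans hs hst)) hst⟩
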